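/- Let E/F be a finite Galois extension with cyclic Galois group H, and let ρ : H → (E^×)^r be a homomorphism into a power of the multiplicative group of an algebraically closed subfield C ⊆ F, landing in (C^×)^r. Then there exists η ∈ (E^×)^r such that τ(η) = η · ρ(τ) for all τ ∈ H, where τ acts coordinatewise on (E^×)^r. -/

import Mathlib

/-- Let `E/F` be a finite Galois extension with cyclic Galois group `H`, `C ⊆ F` an
algebraically closed subfield, and `ρ : H → (Eˣ)^r` a homomorphism whose values lie in
`(C^×)^r`.  Then there is `η ∈ (Eˣ)^r` with `τ(η) = η · ρ(τ)` for all `τ ∈ H`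
(coordinatewise). -/
theorem hilbert90_torus {C F E : Type*} [Field C] [IsAlgClosed C] [Field F] [Field E]
    [Algebra C F] [Algebra C E] [Algebra F E] [IsScalarTower C F E]
    [FiniteDimensional F E] [IsGalois F E] [IsCyclic (E ≃ₐ[F] E)]
    (r : ℕ) (ρ : (E ≃ₐ[F] E) →* (Fin r → Eˣ))
    (hρ : ∀ τ i, ((ρ τ i : E)) ∈ (algebraMap C E).range) :
    ∃ η : Fin r → Eˣ, ∀ τ : E ≃ₐ[F] E, ∀ i,
      τ ((η i : E)) = (η i : E) * (ρ τ i : E) := by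
  -- values of ρ are fixed by every τ
  have hfix : ∀ (σ τ : E ≃ₐ[F] E) (i : Fin r), σ ((ρ τ i : E)) = (ρ τ i : E) := by
    intro σ τ i
    obtain ⟨c, hc⟩ := hρ τ i
    rw [← hc, IsScalarTower.algebraMap_apply C F E]
    exact σ.commutes _
  have key : ∀ i : Fin r, ∃ β : Eˣ, ∀ τ : E ≃ₐ[F] E,
      τ ((β : E)) = (β : E) * (ρ τ i : E) := by
    intro i
    have hcoc : groupCohomology.IsMulCocycle₁ (fun τ : E ≃ₐ[F] E => ρ τ i) := by
      intro g h
      have : ρ (g * h) i = ρ g i * ρ h i := by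
        rw [map_mul]; rfl
      show ρ (g*h) i = _
      rw [this]
      ext
      simp only [Units.val_mul, AlgEquiv.smul_units_def, Units.coe_map, MonoidHom.coe_coe]
      rw [hfix g h i, mul_comm]
    obtain ⟨β, hβ⟩ := groupCohomology.isMulCoboundary₁_of_isMulCocycle₁_of_aut_to_units _ hcoc
    refine ⟨β, fun τ => ?_⟩
    have := hβ τ
    rw [AlgEquiv.smul_units_def, div_eq_iff_eq_mul] at this
    have := congrArg (Units.val) this
    simpa [mul_comm] using this
  choose η hη using key
  exact ⟨η, fun τ i => hη i τ⟩
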